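/- Let G be a finite simple graph with positive integer vertex weights W, and let λ and C be positive integers. Then G is [λ,C]-split colorable if and only if the weight-expanded graph WXP(G) has a [λ,C]-coloring in the unweighted sense (every monochromatic component has at most C vertices). -/

import Mathlib

/-- Reachability inside a set `S`. -/
def ReachIn {V : Type*} (G : SimpleGraph V) (S : Set V) (u v : V) : Prop :=
  Relation.ReflTransGen (fun a b => G.Adj a b ∧ a ∈ S ∧ b ∈ S) u v

/-- The graph whose vertices are `m v` copies of each vertex `v` of `G`, two
distinct copies being adjacent iff they are copies of the same vertex of `G` or
copies of adjacent vertices of `G`.  With `m = W` this is the weight-expanded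
graph `WXP(G)`, and together with any choice of positive weights summing
correctly it describes an arbitrary weight-split graph of `G`. -/
def copyGraph {V : Type*} (G : SimpleGraph V) (m : V → ℕ) :
    SimpleGraph (Σ v : V, Fin (m v)) where
  Adj a b := (a.1 = b.1 ∧ a ≠ b) ∨ G.Adj a.1 b.1
  symm := by
    constructor
    rintro a b (⟨h1, h2⟩ | h)
    · exact Or.inl ⟨h1.symm, h2.symm⟩
    · exact Or.inr h.symm
  loopless := by
    constructor
    rintro a (⟨_, h⟩ | h)
    · exact h rfl
    · exact G.loopless.irrefl _ h

/-- `G` with weights `Wt` is `[λ,C]`-split colorable: some weight-split graph of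
`G` (given by multiplicities `m`, positive copy weights `W'` summing to the
original weights) admits a coloring with `L` colors in which every monochromatic
component has total weight at most `C`. -/
def IsSplitColorable {V : Type*} (G : SimpleGraph V) (Wt : V → ℕ) (L C : ℕ) : Prop :=
  ∃ m : V → ℕ, (∀ v, 0 < m v) ∧
    ∃ W' : (Σ v : V, Fin (m v)) → ℕ,
      (∀ x, 0 < W' x) ∧ (∀ v : V, ∑ t : Fin (m v), W' ⟨v, t⟩ = Wt v) ∧
      ∃ c : (Σ v : V, Fin (m v)) → Fin L,
        ∀ x, (∑ᶠ u ∈ {u | ReachIn (copyGraph G m) {w | c w = c x} x u}, W' u) ≤ C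

-- auxiliary lemmas

lemma reachIn_map {A B : Type*} {G : SimpleGraph A} {H : SimpleGraph B}
    (ψ : A → B) (hψ : ∀ a b, G.Adj a b → ψ a = ψ b ∨ H.Adj (ψ a) (ψ b))
    {S : Set A} {T : Set B} (hS : ∀ a ∈ S, ψ a ∈ T) {x u : A}
    (h : ReachIn G S x u) : ReachIn H T (ψ x) (ψ u) := by
  induction h with
  | refl => exact Relation.ReflTransGen.refl
  | tail _ hstep ih =>
      rcases hψ _ _ hstep.1 with heq | hadj
      · exact heq ▸ ih
      · exact ih.tail ⟨hadj, hS _ hstep.2.1, hS _ hstep.2.2⟩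

/-- The subtype of a sigma type with fixed first component. -/
def sigmaFstFiberEquiv {ι : Type*} {β : ι → Type*} (t : ι) :
    {p : Σ i, β i // p.1 = t} ≃ β t where
  toFun p := cast (congrArg β p.2) p.1.2
  invFun b := ⟨⟨t, b⟩, rfl⟩
  left_inv := by rintro ⟨⟨i, b⟩, rfl⟩; rfl
  right_inv b := rfl

lemma finsum_mem_eq_ncard {A : Type*} [Fintype A] (S : Set A) :
    (∑ᶠ u ∈ S, (1 : ℕ)) = S.ncard := by
  classical
  have hS : S.Finite := S.toFinite
  rw [← hS.coe_toFinset, finsum_mem_coe_finset, Set.ncard_coe_finset]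
  simp

lemma ncard_preimage_eq_finsum {A B : Type*} [Fintype A] [Fintype B] [DecidableEq B]
    (ψ : A → B) (W : B → ℕ) (hfib : ∀ y, (Finset.univ.filter (fun x => ψ x = y)).card = W y)
    (S : Set B) : (ψ ⁻¹' S).ncard = ∑ᶠ y ∈ S, W y := by
  classical
  have hS : S.Finite := S.toFinite
  have hP : (ψ ⁻¹' S).Finite := (ψ ⁻¹' S).toFinite
  have h2 : (∑ᶠ y ∈ S, W y) = ∑ y ∈ hS.toFinset, W y := by
    rw [← finsum_mem_coe_finset, hS.coe_toFinset]
  rw [Set.ncard_eq_toFinset_card _ hP, h2]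
  rw [Finset.card_eq_sum_card_fiberwise (f := ψ) (t := hS.toFinset)
    (fun x hx => by simpa using (hP.mem_toFinset.mp hx))]
  refine Finset.sum_congr rfl fun y hy => ?_
  rw [← hfib y]
  congr 1
  ext x
  simp only [Finset.mem_filter, hP.mem_toFinset, Set.mem_preimage, Finset.mem_univ, true_and]
  exact ⟨fun h => h.2, fun h => ⟨h ▸ hS.mem_toFinset.mp hy, h⟩⟩

/-- a weighted graph `G` is `[λ,C]`-split colorable iff its
weight-expanded graph `WXP(G)` has an (unweighted) `[λ,C]`-coloring. -/
theorem splitColorable_iff_wxp_colorable {V : Type*} [Fintype V]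
    (G : SimpleGraph V) (Wt : V → ℕ) (hWt : ∀ v, 0 < Wt v)
    (L C : ℕ) (hL : 0 < L) (hC : 0 < C) :
    IsSplitColorable G Wt L C ↔
      ∃ c : (Σ v : V, Fin (Wt v)) → Fin L,
        ∀ x, {u | ReachIn (copyGraph G Wt) {w | c w = c x} x u}.ncard ≤ C := by
  classical
  constructor
  · rintro ⟨m, hm, W', hW', hsum, c, hc⟩
    -- an equivalence splitting each Fin (Wt v) into blocks of sizes W' ⟨v,t⟩
    have ecard : ∀ v : V, Fintype.card (Σ t : Fin (m v), Fin (W' ⟨v, t⟩)) =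
        Fintype.card (Fin (Wt v)) := by
      intro v
      simp [Fintype.card_sigma, hsum v]
    let e : ∀ v : V, Fin (Wt v) ≃ Σ t : Fin (m v), Fin (W' ⟨v, t⟩) :=
      fun v => (Fintype.equivOfCardEq (ecard v)).symm
    let ψ : (Σ v : V, Fin (Wt v)) → Σ v : V, Fin (m v) :=
      fun x => ⟨x.1, (e x.1 x.2).1⟩
    -- fibers of ψ have the right sizes
    have hfib : ∀ y : Σ v : V, Fin (m v),
        (Finset.univ.filter (fun x => ψ x = y)).card = W' y := by
      rintro ⟨v, t⟩
      rw [← Fintype.card_subtype]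
      have e1 : {x : Σ v : V, Fin (Wt v) // ψ x = ⟨v, t⟩} ≃
          {s : Fin (Wt v) // (e v s).1 = t} := by
        refine ⟨fun p => ⟨cast (congrArg (fun w => Fin (Wt w)) (congrArg Sigma.fst p.2)) p.1.2,
          ?_⟩, fun q => ⟨⟨v, q.1⟩, by simp [ψ, Sigma.ext_iff, q.2]⟩, ?_, ?_⟩
        · obtain ⟨⟨v', s⟩, h⟩ := p
          obtain ⟨h1, h2⟩ : v' = v ∧ _ := Sigma.ext_iff.mp h
          subst h1
          simpa [ψ, Sigma.ext_iff] using h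
        · rintro ⟨⟨v', s⟩, h⟩
          obtain ⟨h1, h2⟩ : v' = v ∧ _ := Sigma.ext_iff.mp h
          subst h1
          rfl
        · rintro ⟨s, h⟩; rfl
      have e2 : {s : Fin (Wt v) // (e v s).1 = t} ≃
          {p : Σ t' : Fin (m v), Fin (W' ⟨v, t'⟩) // p.1 = t} :=
        (e v).subtypeEquiv (fun s => Iff.rfl)
      rw [Fintype.card_congr (e1.trans (e2.trans (sigmaFstFiberEquiv t)))]
      simp
    -- the coloring of WXP(G)
    refine ⟨fun x => c (ψ x), fun x => ?_⟩
    have hsub : {u | ReachIn (copyGraph G Wt) {w | c (ψ w) = c (ψ x)} x u} ⊆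
        ψ ⁻¹' {u | ReachIn (copyGraph G m) {w | c w = c (ψ x)} (ψ x) u} := by
      intro u hu
      refine reachIn_map ψ ?_ (fun a ha => ha) hu
      rintro ⟨v, s⟩ ⟨v', s'⟩ (⟨h1, h2⟩ | h)
      · dsimp at h1; subst h1
        by_cases hq : (e v s).1 = (e v s').1
        · exact Or.inl (by simp [ψ, hq])
        · exact Or.inr (Or.inl ⟨rfl, by simp [ψ, Sigma.ext_iff, hq]⟩)
      · exact Or.inr (Or.inr h)
    calc {u | ReachIn (copyGraph G Wt) {w | c (ψ w) = c (ψ x)} x u}.ncard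
        ≤ (ψ ⁻¹' {u | ReachIn (copyGraph G m) {w | c w = c (ψ x)} (ψ x) u}).ncard :=
          Set.ncard_le_ncard hsub (Set.toFinite _)
      _ = ∑ᶠ y ∈ {u | ReachIn (copyGraph G m) {w | c w = c (ψ x)} (ψ x) u}, W' y :=
          ncard_preimage_eq_finsum ψ W' hfib _
      _ ≤ C := hc (ψ x)
  · rintro ⟨c, hc⟩
    refine ⟨Wt, hWt, fun _ => 1, fun _ => one_pos, fun v => by simp, c, fun x => ?_⟩
    rw [finsum_mem_eq_ncard]
    exact hc x
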